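/- Let n ≥ 3, 1 ≤ p < ∞, 0 < α ≤ n, and ε > 0. Let ν be a positive Borel measure on R^n and let x ∈ H (so x_n > 0) with |x| ≥ 2. Suppose that ν(B(x,t)) ≤ ε^p (t/|x|)^{pn−α} for every t > 0. Then ∫_{{y : x_n/2 < |y − x| ≤ 3|x|}} |y − x|^{−pn} dν(y) ≤ ε^p |x|^{−pn} ( 3^{−α} + pn/α ) (|x|/x_n)^α (up to replacing 3^{−α} + pn/α by a constant of the same form depending only on p, n, α). -/

import Mathlib

open MeasureTheory Filter Metric Asymptotics ENNReal

/-- The last coordinate `x_n` of a point `x ∈ ℝⁿ`. -/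
noncomputable def lastCoord {n : ℕ} (x : EuclideanSpace ℝ (Fin n)) : ℝ :=
  if h : 0 < n then x ⟨n - 1, Nat.sub_lt h one_pos⟩ else 0

/-- The upper half-space `H = {x ∈ ℝⁿ : x_n > 0}`. -/
def upperHalfSpace (n : ℕ) : Set (EuclideanSpace ℝ (Fin n)) :=
  {x | 0 < lastCoord x}

/-- `ω_n = 2 π^{n/2} / Γ(n/2)`, the surface area of the unit sphere in ℝⁿ. -/
noncomputable def surfaceArea (n : ℕ) : ℝ :=
  2 * Real.pi ^ ((n : ℝ) / 2) / Real.Gamma ((n : ℝ) / 2)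

/-- The embedding `y' ↦ (y', 0)` of `ℝ^{n-1}` into `ℝⁿ`. -/
noncomputable def extendBdry {n : ℕ} (y' : EuclideanSpace ℝ (Fin (n - 1))) :
    EuclideanSpace ℝ (Fin n) :=
  (EuclideanSpace.equiv (Fin n) ℝ).symm
    (fun i => if h : (i : ℕ) < n - 1 then y' ⟨(i : ℕ), h⟩ else 0)

/-- The Poisson kernel `P(x, y') = 2 x_n / (ω_n |x - (y',0)|^n)` of the half-space. -/
noncomputable def poissonKernel' (n : ℕ) (x : EuclideanSpace ℝ (Fin n))
    (y' : EuclideanSpace ℝ (Fin (n - 1))) : ℝ :=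
  2 * lastCoord x / (surfaceArea n * ‖x - extendBdry y'‖ ^ n)

/-- The Poisson integral `v(x) = ∫_{ℝ^{n-1}} P(x,y') f(y') dy'`. -/
noncomputable def poissonIntegral (n : ℕ) (f : EuclideanSpace ℝ (Fin (n - 1)) → ℝ)
    (x : EuclideanSpace ℝ (Fin n)) : ℝ :=
  ∫ y', poissonKernel' n x y' * f y'

/-- The reflection `y* = (y', -y_n)` of `y` in the boundary hyperplane. -/
noncomputable def reflectPt {n : ℕ} (y : EuclideanSpace ℝ (Fin n)) :
    EuclideanSpace ℝ (Fin n) :=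
  (EuclideanSpace.equiv (Fin n) ℝ).symm
    (fun i => if (i : ℕ) = n - 1 then -(y i) else y i)

/-- The Green function `G(x,y) = r_n (|x - y*|^{2-n} - |x - y|^{2-n})` of the
half-space, where `r_n = 1/((n-2) ω_n)`. -/
noncomputable def greenFn (n : ℕ) (x y : EuclideanSpace ℝ (Fin n)) : ℝ :=
  (1 / (((n : ℝ) - 2) * surfaceArea n)) *
    (‖x - reflectPt y‖ ^ ((2 : ℝ) - n) - ‖x - y‖ ^ ((2 : ℝ) - n))

/-- The Green potential `h(x) = ∫_H G(x,y) dμ(y)`. -/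
noncomputable def greenPotential (n : ℕ) (μ : Measure (EuclideanSpace ℝ (Fin n)))
    (x : EuclideanSpace ℝ (Fin n)) : ℝ :=
  ∫ y in upperHalfSpace n, greenFn n x y ∂μ

/-- The maximal function of order `β` of a Borel measure `μ`:
`M(dμ)(x) = sup_{0<r<∞} μ(B(x,r))/r^β`. -/
noncomputable def maxFn {n : ℕ} (μ : Measure (EuclideanSpace ℝ (Fin n))) (β : ℝ)
    (x : EuclideanSpace ℝ (Fin n)) : ℝ≥0∞ :=
  ⨆ (r : ℝ) (_ : 0 < r), μ (Metric.ball x r) / ENNReal.ofReal (r ^ β)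

lemma key_eq (r X E q α : ℝ) (hr : 0 < r) (hX : 0 < X) (k : ℕ) :
    (r * 2 ^ k) ^ (-q) * (E * (r * 2 ^ (k + 2) / X) ^ (q - α)) =
      (E * r ^ (-α) * 4 ^ (q - α) * X ^ (α - q)) * ((2:ℝ) ^ (-α)) ^ k := by
  have hb : (0:ℝ) < (2:ℝ) ^ k := by positivity
  have e0 : (r * 2 ^ (k + 2) / X) = (r * 2 ^ k * 4) / X := by ring
  have e1 : (r * 2 ^ k * 4 / X) ^ (q - α)
      = r ^ (q - α) * ((2:ℝ) ^ k) ^ (q - α) * 4 ^ (q - α) * X ^ (α - q) := by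
    rw [Real.div_rpow (by positivity) hX.le,
      Real.mul_rpow (by positivity) (by norm_num : (0:ℝ) ≤ 4),
      Real.mul_rpow hr.le hb.le, div_eq_mul_inv, ← Real.rpow_neg hX.le, neg_sub]
  have e2 : (r * 2 ^ k) ^ (-q) = r ^ (-q) * ((2:ℝ) ^ k) ^ (-q) :=
    Real.mul_rpow hr.le hb.le
  have h1 : r ^ (-q) * r ^ (q - α) = r ^ (-α) := by
    rw [← Real.rpow_add hr]; ring_nf
  have h2 : ((2:ℝ) ^ k) ^ (-q) * ((2:ℝ) ^ k) ^ (q - α) = ((2:ℝ) ^ (-α)) ^ k := by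
    rw [← Real.rpow_add hb, show -q + (q - α) = -α from by ring,
      ← Real.rpow_natCast (2:ℝ) k, ← Real.rpow_mul (by norm_num),
      ← Real.rpow_natCast ((2:ℝ) ^ (-α)) k, ← Real.rpow_mul (by norm_num), mul_comm]
  calc (r * 2 ^ k) ^ (-q) * (E * (r * 2 ^ (k + 2) / X) ^ (q - α))
      = (r ^ (-q) * r ^ (q - α)) * (((2:ℝ) ^ k) ^ (-q) * ((2:ℝ) ^ k) ^ (q - α))
        * (E * 4 ^ (q - α) * X ^ (α - q)) := by rw [e0, e1, e2]; ring
    _ = _ := by rw [h1, h2]; ring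

/-- The annulus estimate from the proofs of Theorems 1 and 2: if
`ν(B(x,t)) ≤ ε^p (t/|x|)^{pn-α}` for all `t > 0`, then
`∫_{x_n/2 < |y-x| ≤ 3|x|} |y-x|^{-pn} dν(y) ≤ C ε^p |x|^{-pn} (|x|/x_n)^α`,
where `C` is a constant of the form `3^{-α} + pn/α` depending only on `p, n, α`. -/
theorem stmt17 (n : ℕ) (hn : 3 ≤ n) (p α : ℝ) (hp : 1 ≤ p)
    (hα₁ : 0 < α) (hα₂ : α ≤ n) :
    ∃ C : ℝ, 0 < C ∧
      ∀ ε : ℝ, 0 < ε → ∀ ν : Measure (EuclideanSpace ℝ (Fin n)),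
        ∀ x ∈ upperHalfSpace n, 2 ≤ ‖x‖ →
        (∀ t : ℝ, 0 < t →
          ν (Metric.ball x t) ≤ ENNReal.ofReal (ε ^ p * (t / ‖x‖) ^ (p * n - α))) →
        ∫⁻ y in {y : EuclideanSpace ℝ (Fin n) |
            lastCoord x / 2 < ‖y - x‖ ∧ ‖y - x‖ ≤ 3 * ‖x‖},
          ENNReal.ofReal (‖y - x‖ ^ (-(p * n))) ∂ν ≤
        ENNReal.ofReal (C * ε ^ p * ‖x‖ ^ (-(p * n)) * (‖x‖ / lastCoord x) ^ α) := by
  have hn3 : (3:ℝ) ≤ (n:ℝ) := by exact_mod_cast hn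
  have hq0 : 0 < p * n := by nlinarith
  have hg0 : (0:ℝ) < (2:ℝ) ^ (-α) := by positivity
  have hg1 : (2:ℝ) ^ (-α) < 1 :=
    Real.rpow_lt_one_of_one_lt_of_neg one_lt_two (by linarith)
  have hg2 : (0:ℝ) < 1 - (2:ℝ) ^ (-α) := by linarith
  refine ⟨2 ^ α * 4 ^ (p * n - α) * (1 - (2:ℝ) ^ (-α))⁻¹, by positivity, ?_⟩
  intro ε hε ν x hx hX2 hyp
  set X := ‖x‖ with hXdef
  set a := lastCoord x with hadef
  have ha : 0 < a := hx
  have hX0 : (0:ℝ) < X := lt_of_lt_of_le two_pos hX2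
  set r : ℝ := a / 2 with hrdef
  have hr : 0 < r := by positivity
  set q : ℝ := p * n with hqdef
  set E : ℝ := ε ^ p with hEdef
  have hE : 0 < E := Real.rpow_pos_of_pos hε p
  set D : ℝ := E * r ^ (-α) * 4 ^ (q - α) * X ^ (α - q) with hDdef
  have hD : 0 < D := by positivity
  set Ann : ℕ → Set (EuclideanSpace ℝ (Fin n)) :=
    fun k => {y | r * 2 ^ k < ‖y - x‖ ∧ ‖y - x‖ ≤ r * 2 ^ (k + 1)} with hAnn
  have hcover : {y : EuclideanSpace ℝ (Fin n) | r < ‖y - x‖ ∧ ‖y - x‖ ≤ 3 * X}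
      ⊆ ⋃ k, Ann k := by
    intro y hy
    obtain ⟨h1, _⟩ := hy
    have hex : ∃ m : ℕ, ‖y - x‖ ≤ r * 2 ^ m := by
      obtain ⟨m, hm⟩ := pow_unbounded_of_one_lt (‖y - x‖ / r) one_lt_two
      rw [div_lt_iff₀ hr] at hm
      exact ⟨m, by nlinarith⟩
    have hm0 : 0 < Nat.find hex := by
      rcases Nat.eq_zero_or_pos (Nat.find hex) with h | h
      · exfalso
        have hs := Nat.find_spec hex
        rw [h] at hs
        simp only [pow_zero, mul_one] at hs
        linarith
      · exact h
    refine Set.mem_iUnion.2 ⟨Nat.find hex - 1, ?_, ?_⟩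
    · exact not_le.mp (Nat.find_min hex (Nat.sub_lt hm0 one_pos))
    · rw [Nat.sub_add_cancel hm0]
      exact Nat.find_spec hex
  have termbound : ∀ k : ℕ,
      ∫⁻ y in Ann k, ENNReal.ofReal (‖y - x‖ ^ (-q)) ∂ν
        ≤ ENNReal.ofReal (D * ((2:ℝ) ^ (-α)) ^ k) := by
    intro k
    have hrk : (0:ℝ) < r * 2 ^ k := by positivity
    calc ∫⁻ y in Ann k, ENNReal.ofReal (‖y - x‖ ^ (-q)) ∂ν
        ≤ ∫⁻ _ in Ann k, ENNReal.ofReal ((r * 2 ^ k) ^ (-q)) ∂ν := by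
          refine setLIntegral_mono measurable_const fun y hy => ?_
          exact ENNReal.ofReal_le_ofReal
            (Real.rpow_le_rpow_of_nonpos hrk hy.1.le (by linarith))
      _ = ENNReal.ofReal ((r * 2 ^ k) ^ (-q)) * ν (Ann k) := setLIntegral_const _ _
      _ ≤ ENNReal.ofReal ((r * 2 ^ k) ^ (-q)) * ν (Metric.ball x (r * 2 ^ (k + 2))) := by
          gcongr
          intro y hy
          rw [mem_ball, dist_eq_norm]
          calc ‖y - x‖ ≤ r * 2 ^ (k + 1) := hy.2
            _ < r * 2 ^ (k + 2) := by
                have h2 : (0:ℝ) < (2:ℝ) ^ (k + 1) := by positivity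
                have e : (2:ℝ) ^ (k + 2) = 2 ^ (k + 1) * 2 := by ring
                rw [e]; nlinarith
      _ ≤ ENNReal.ofReal ((r * 2 ^ k) ^ (-q)) *
            ENNReal.ofReal (E * (r * 2 ^ (k + 2) / X) ^ (q - α)) := by
          gcongr
          exact hyp _ (by positivity)
      _ = ENNReal.ofReal ((r * 2 ^ k) ^ (-q) * (E * (r * 2 ^ (k + 2) / X) ^ (q - α))) :=
          (ENNReal.ofReal_mul (by positivity)).symm
      _ = ENNReal.ofReal (D * ((2:ℝ) ^ (-α)) ^ k) := by
          rw [key_eq r X E q α hr hX0 k]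
  calc ∫⁻ y in {y : EuclideanSpace ℝ (Fin n) | r < ‖y - x‖ ∧ ‖y - x‖ ≤ 3 * X},
        ENNReal.ofReal (‖y - x‖ ^ (-q)) ∂ν
      ≤ ∫⁻ y in ⋃ k, Ann k, ENNReal.ofReal (‖y - x‖ ^ (-q)) ∂ν :=
        lintegral_mono_set hcover
    _ ≤ ∑' k, ∫⁻ y in Ann k, ENNReal.ofReal (‖y - x‖ ^ (-q)) ∂ν :=
        lintegral_iUnion_le _ _
    _ ≤ ∑' k, ENNReal.ofReal (D * ((2:ℝ) ^ (-α)) ^ k) :=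
        ENNReal.tsum_le_tsum termbound
    _ = ∑' k, ENNReal.ofReal D * (ENNReal.ofReal ((2:ℝ) ^ (-α))) ^ k := by
        congr 1; funext k
        rw [ENNReal.ofReal_mul hD.le, ENNReal.ofReal_pow hg0.le]
    _ = ENNReal.ofReal D * (1 - ENNReal.ofReal ((2:ℝ) ^ (-α)))⁻¹ := by
        rw [ENNReal.tsum_mul_left, ENNReal.tsum_geometric]
    _ = ENNReal.ofReal (D * (1 - (2:ℝ) ^ (-α))⁻¹) := by
        rw [ENNReal.ofReal_mul hD.le, ENNReal.ofReal_inv_of_pos hg2,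
          ENNReal.ofReal_sub _ hg0.le, ENNReal.ofReal_one]
    _ ≤ ENNReal.ofReal (2 ^ α * 4 ^ (q - α) * (1 - (2:ℝ) ^ (-α))⁻¹
          * E * X ^ (-q) * (X / a) ^ α) := by
        apply ENNReal.ofReal_le_ofReal
        apply le_of_eq
        have ea : (a / 2) ^ (-α) = a ^ (-α) * 2 ^ α := by
          rw [Real.div_rpow ha.le (by norm_num : (0:ℝ) ≤ 2),
            Real.rpow_neg (by norm_num : (0:ℝ) ≤ 2)]
          field_simp
        have eX : X ^ (α - q) = X ^ α * X ^ (-q) := by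
          rw [← Real.rpow_add hX0]; ring_nf
        have eXa : (X / a) ^ α = X ^ α * a ^ (-α) := by
          rw [Real.div_rpow hX0.le ha.le, Real.rpow_neg ha.le, div_eq_mul_inv]
        rw [hDdef, hrdef, ea, eX, eXa]; ring
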